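/- Let π and π' be minimal valid functions. Then E(π) ⊆ E(π') if and only if P(π) ⊆ P(π'). -/

import Mathlib

/-- A finite-support function `y : ℝ → ℕ` is feasible if `∑ r, r·y(r) − f ∈ ℤ`. -/
def Feasible (f : ℝ) (y : ℝ →₀ ℕ) : Prop :=
  ∃ z : ℤ, (∑ r ∈ y.support, r * (y r : ℝ)) - f = (z : ℝ)

/-- `π` is a valid function: nonnegative, and `∑ r, π(r)·y(r) ≥ 1` for every feasible `y`. -/
def Valid (f : ℝ) (π : ℝ → ℝ) : Prop :=
  (∀ x, 0 ≤ π x) ∧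
    ∀ y : ℝ →₀ ℕ, Feasible f y → 1 ≤ ∑ r ∈ y.support, π r * (y r : ℝ)

/-- A valid function is minimal if no other valid function is pointwise ≤ it. -/
def MinimalValid (f : ℝ) (π : ℝ → ℝ) : Prop :=
  Valid f π ∧ ¬ ∃ π' : ℝ → ℝ, Valid f π' ∧ (∀ x, π' x ≤ π x) ∧ π' ≠ π

/-- `P(π)`: the set of feasible `y` with `∑ r, π(r)·y(r) = 1`. -/
def Pset (f : ℝ) (π : ℝ → ℝ) : Set (ℝ →₀ ℕ) :=
  {y | Feasible f y ∧ ∑ r ∈ y.support, π r * (y r : ℝ) = 1}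

/-- `E(π) = {(x,y) : π(x) + π(y) = π(x+y)}`. -/
def Eset (π : ℝ → ℝ) : Set (ℝ × ℝ) :=
  {p | π p.1 + π p.2 = π (p.1 + p.2)}

/-- A valid function `π` is a facet if every valid `π'` with `P(π) ⊆ P(π')` equals `π`. -/
def IsFacet (f : ℝ) (π : ℝ → ℝ) : Prop :=
  Valid f π ∧ ∀ π' : ℝ → ℝ, Valid f π' → Pset f π ⊆ Pset f π' → π' = π

/-- A valid function `π` is a weak facet if every valid `π'` with `P(π) ⊆ P(π')`
has `P(π) = P(π')`. -/
def IsWeakFacet (f : ℝ) (π : ℝ → ℝ) : Prop :=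
  Valid f π ∧ ∀ π' : ℝ → ℝ, Valid f π' → Pset f π ⊆ Pset f π' → Pset f π = Pset f π'

/-- A valid function `π` is extreme if whenever `π = (π¹ + π²)/2` with `π¹, π²` valid,
then `π¹ = π² = π`. -/
def ExtremeFunc (f : ℝ) (π : ℝ → ℝ) : Prop :=
  Valid f π ∧ ∀ π₁ π₂ : ℝ → ℝ, Valid f π₁ → Valid f π₂ →
    (∀ x, π x = (π₁ x + π₂ x) / 2) → π₁ = π ∧ π₂ = π

/-- `π` is piecewise linear: there is a closed, discrete set `B ⊆ ℝ` of breakpoints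
such that `π` is affine on each connected component of `ℝ \ B`. -/
def PiecewiseLinear (π : ℝ → ℝ) : Prop :=
  ∃ B : Set ℝ, IsClosed B ∧
    (∀ x ∈ B, ∃ ε > (0 : ℝ), ∀ y ∈ B, |y - x| < ε → y = x) ∧
    (∀ x ∉ B, ∃ a b : ℝ, ∀ z ∈ connectedComponentIn Bᶜ x, π z = a * z + b)

/-- `π` is continuous piecewise linear. -/
def ContPiecewiseLinear (π : ℝ → ℝ) : Prop :=
  PiecewiseLinear π ∧ Continuous π

namespace Stmt2Aux

open Finsupp

/-- The value `∑ r, g r * y r`. -/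
noncomputable def Ssum (g : ℝ → ℝ) (y : ℝ →₀ ℕ) : ℝ := ∑ r ∈ y.support, g r * (y r : ℝ)

lemma Ssum_eq_sum (g : ℝ → ℝ) (y : ℝ →₀ ℕ) :
    Ssum g y = y.sum (fun r n => g r * (n : ℝ)) := rfl

lemma Ssum_add (g : ℝ → ℝ) (y₁ y₂ : ℝ →₀ ℕ) :
    Ssum g (y₁ + y₂) = Ssum g y₁ + Ssum g y₂ := by
  simp only [Ssum_eq_sum]
  exact Finsupp.sum_add_index' (fun a => by simp) (fun a b₁ b₂ => by push_cast; ring)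

lemma Ssum_single (g : ℝ → ℝ) (r : ℝ) (n : ℕ) :
    Ssum g (Finsupp.single r n) = g r * n := by
  rw [Ssum_eq_sum]; exact Finsupp.sum_single_index (by simp)

lemma Ssum_zero (g : ℝ → ℝ) : Ssum g 0 = 0 := by simp [Ssum]

lemma Ssum_nonneg {g : ℝ → ℝ} (hg : ∀ x, 0 ≤ g x) (y : ℝ →₀ ℕ) : 0 ≤ Ssum g y :=
  Finset.sum_nonneg fun r _ => mul_nonneg (hg r) (Nat.cast_nonneg _)

lemma Ssum_congr {g h : ℝ → ℝ} (y : ℝ →₀ ℕ) (hgh : ∀ r ∈ y.support, g r = h r) :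
    Ssum g y = Ssum h y :=
  Finset.sum_congr rfl fun r hr => by rw [hgh r hr]

lemma Ssum_erase (g : ℝ → ℝ) (y : ℝ →₀ ℕ) (x : ℝ) :
    Ssum g y = Ssum g (y.erase x) + g x * (y x : ℝ) := by
  conv_lhs => rw [← Finsupp.erase_add_single x y]
  rw [Ssum_add, Ssum_single]

/-- weighted sum `∑ r, r * y r` -/
noncomputable def wsum (y : ℝ →₀ ℕ) : ℝ := Ssum (fun r => r) y

lemma raw_eq_Ssum (g : ℝ → ℝ) (y : ℝ →₀ ℕ) :
    (∑ r ∈ y.support, g r * (y r : ℝ)) = Ssum g y := rfl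

lemma raw_eq_wsum (y : ℝ →₀ ℕ) :
    (∑ r ∈ y.support, r * (y r : ℝ)) = wsum y := rfl

lemma wsum_add (y₁ y₂ : ℝ →₀ ℕ) : wsum (y₁ + y₂) = wsum y₁ + wsum y₂ := Ssum_add _ _ _

lemma wsum_single (r : ℝ) (n : ℕ) : wsum (Finsupp.single r n) = r * n := Ssum_single _ r n

lemma wsum_zero : wsum 0 = 0 := Ssum_zero _

lemma wsum_erase (y : ℝ →₀ ℕ) (x : ℝ) : wsum y = wsum (y.erase x) + x * (y x : ℝ) :=
  Ssum_erase _ y x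

lemma feasible_iff (f : ℝ) (y : ℝ →₀ ℕ) : Feasible f y ↔ ∃ z : ℤ, wsum y - f = (z : ℝ) :=
  Iff.rfl

/-- total multiplicity -/
def cardy (y : ℝ →₀ ℕ) : ℕ := y.sum fun _ n => n

lemma cardy_add (y₁ y₂ : ℝ →₀ ℕ) : cardy (y₁ + y₂) = cardy y₁ + cardy y₂ :=
  Finsupp.sum_add_index' (fun _ => rfl) (fun _ _ _ => rfl)

lemma cardy_single (r : ℝ) (n : ℕ) : cardy (Finsupp.single r n) = n :=
  Finsupp.sum_single_index rfl

lemma cardy_pos {y : ℝ →₀ ℕ} (hy : y ≠ 0) : 1 ≤ cardy y := by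
  obtain ⟨r, hr⟩ := Finsupp.support_nonempty_iff.2 hy
  have h1 : y r ≤ cardy y :=
    Finset.single_le_sum (f := fun r => y r) (fun i _ => Nat.zero_le _) hr
  have h2 : y r ≠ 0 := Finsupp.mem_support_iff.1 hr
  omega

lemma decomp {y : ℝ →₀ ℕ} {r : ℝ} (hr : r ∈ y.support) :
    ∃ y₁ : ℝ →₀ ℕ, y = y₁ + Finsupp.single r 1 ∧ cardy y = cardy y₁ + 1 := by
  have hy : y r ≠ 0 := Finsupp.mem_support_iff.1 hr
  refine ⟨y.erase r + Finsupp.single r (y r - 1), ?_, ?_⟩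
  · calc y = y.erase r + Finsupp.single r (y r) := (Finsupp.erase_add_single r y).symm
      _ = y.erase r + (Finsupp.single r (y r - 1) + Finsupp.single r 1) := by
          rw [← Finsupp.single_add, (by omega : y r - 1 + 1 = y r)]
      _ = y.erase r + Finsupp.single r (y r - 1) + Finsupp.single r 1 := by
          rw [add_assoc]
  · have h := congrArg cardy
      (calc y = y.erase r + Finsupp.single r (y r) := (Finsupp.erase_add_single r y).symm
        _ = y.erase r + (Finsupp.single r (y r - 1) + Finsupp.single r 1) := by
            rw [← Finsupp.single_add, (by omega : y r - 1 + 1 = y r)]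
        _ = y.erase r + Finsupp.single r (y r - 1) + Finsupp.single r 1 := by
            rw [add_assoc])
    rw [cardy_add, cardy_single] at h
    exact h

lemma f_not_int {f : ℝ} (hf : f ∈ Set.Ioo (0 : ℝ) 1) (z : ℤ) : f ≠ (z : ℝ) := by
  rintro rfl
  obtain ⟨h0, h1⟩ := hf
  have h0' : 0 < z := by exact_mod_cast h0
  have h1' : z < 1 := by exact_mod_cast h1
  omega

section Minimal

variable {f : ℝ} {π : ℝ → ℝ}

lemma valid_sum (hv : Valid f π) {y : ℝ →₀ ℕ} (hy : Feasible f y) : 1 ≤ Ssum π y :=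
  hv.2 y hy

/-- Pointwise update contradiction: if we can lower a minimal valid function at one
point and keep validity, we get False. -/
lemma update_contra (hmin : MinimalValid f π) (x v : ℝ) (hv : 0 ≤ v) (hvx : v < π x)
    (hval : ∀ y : ℝ →₀ ℕ, Feasible f y → y x ≠ 0 →
      1 ≤ Ssum π (y.erase x) + v * (y x : ℝ)) : False := by
  classical
  apply hmin.2
  refine ⟨Function.update π x v, ⟨?_, ?_⟩, ?_, ?_⟩
  · intro t
    by_cases ht : t = x
    · subst ht; rw [Function.update_self]; exact hv
    · rw [Function.update_of_ne ht]; exact hmin.1.1 t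
  · intro y hy
    have hS : (∑ r ∈ y.support, Function.update π x v r * (y r : ℝ))
        = Ssum (Function.update π x v) y := rfl
    rw [hS, Ssum_erase (Function.update π x v) y x,
      Ssum_congr (g := Function.update π x v) (h := π) (y.erase x) ?hcongr,
      Function.update_self]
    case hcongr =>
      intro r hr
      rw [Finsupp.support_erase] at hr
      exact Function.update_of_ne (Finset.ne_of_mem_erase hr) _ _
    by_cases hx0 : y x = 0
    · rw [hx0]
      have := valid_sum hmin.1 hy
      rw [Ssum_erase π y x, hx0] at this
      simpa using this
    · exact hval y hy hx0
  · intro t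
    by_cases ht : t = x
    · subst ht; rw [Function.update_self]; exact le_of_lt hvx
    · rw [Function.update_of_ne ht]
  · intro h
    have := congrFun h x
    rw [Function.update_self] at this
    exact absurd this (ne_of_lt hvx)

lemma le_one (hmin : MinimalValid f π) (x : ℝ) : π x ≤ 1 := by
  by_contra h
  push_neg at h
  refine update_contra hmin x 1 zero_le_one h ?_
  intro y _ hyx
  have h1 : (1 : ℝ) ≤ (y x : ℝ) := by exact_mod_cast Nat.one_le_iff_ne_zero.2 hyx
  have h2 : 0 ≤ Ssum π (y.erase x) := Ssum_nonneg hmin.1.1 _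
  linarith

lemma int_zero (hf : f ∈ Set.Ioo (0 : ℝ) 1) (hmin : MinimalValid f π) (z : ℤ) :
    π (z : ℝ) = 0 := by
  by_contra h
  have hpos : 0 < π (z : ℝ) := lt_of_le_of_ne (hmin.1.1 _) (Ne.symm h)
  refine update_contra hmin (z : ℝ) 0 le_rfl hpos ?_
  intro y hy _
  obtain ⟨w, hw⟩ := hy
  rw [raw_eq_wsum] at hw
  have hfeas : Feasible f (y.erase (z : ℝ)) := by
    refine ⟨w - z * (y (z : ℝ) : ℤ), ?_⟩
    have hws : wsum y = wsum (y.erase (z : ℝ)) + (z : ℝ) * (y (z : ℝ) : ℝ) :=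
      wsum_erase y (z : ℝ)
    rw [raw_eq_wsum]
    push_cast
    rw [hws] at hw
    linarith
  have := valid_sum hmin.1 hfeas
  linarith

lemma subadd (hmin : MinimalValid f π) (a b : ℝ) : π (a + b) ≤ π a + π b := by
  by_contra h
  push_neg at h
  refine update_contra hmin (a + b) (π a + π b)
    (add_nonneg (hmin.1.1 a) (hmin.1.1 b)) h ?_
  intro y hy _
  obtain ⟨w, hw⟩ := hy
  rw [raw_eq_wsum] at hw
  set m := y (a + b) with hm
  have hfeas : Feasible f (y.erase (a + b) + Finsupp.single a m + Finsupp.single b m) := by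
    refine ⟨w, ?_⟩
    have h1 : wsum (y.erase (a + b) + Finsupp.single a m + Finsupp.single b m)
        = wsum (y.erase (a + b)) + a * m + b * m := by
      rw [wsum_add, wsum_add, wsum_single, wsum_single]
    have h2 : wsum y = wsum (y.erase (a + b)) + (a + b) * (m : ℝ) :=
      wsum_erase y (a + b)
    rw [raw_eq_wsum, h1]
    rw [h2] at hw
    linarith [hw]
  have := valid_sum hmin.1 hfeas
  rw [Ssum_add, Ssum_add, Ssum_single, Ssum_single] at this
  linarith

lemma periodic (hf : f ∈ Set.Ioo (0 : ℝ) 1) (hmin : MinimalValid f π) (x : ℝ) (z : ℤ) :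
    π (x + (z : ℝ)) = π x := by
  have h1 := subadd hmin x (z : ℝ)
  rw [int_zero hf hmin z] at h1
  have h2 := subadd hmin (x + (z : ℝ)) ((-z : ℤ) : ℝ)
  rw [int_zero hf hmin (-z)] at h2
  have h3 : x + (z : ℝ) + ((-z : ℤ) : ℝ) = x := by push_cast; ring
  rw [h3] at h2
  linarith

lemma pi_f (hmin : MinimalValid f π) : π f = 1 := by
  refine le_antisymm (le_one hmin f) ?_
  have hfeas : Feasible f (Finsupp.single f 1) := by
    refine ⟨0, ?_⟩
    rw [raw_eq_wsum, wsum_single]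
    push_cast; ring
  have := valid_sum hmin.1 hfeas
  rw [Ssum_single] at this
  simpa using this

lemma chain (hsub : ∀ a b : ℝ, π (a + b) ≤ π a + π b) :
    ∀ N : ℕ, ∀ y : ℝ →₀ ℕ, cardy y ≤ N → y ≠ 0 → π (wsum y) ≤ Ssum π y := by
  intro N
  induction N with
  | zero =>
    intro y hc hy
    exact absurd hc (by have := cardy_pos hy; omega)
  | succ N ih =>
    intro y hc hy
    obtain ⟨r, hr⟩ := Finsupp.support_nonempty_iff.2 hy
    obtain ⟨y₁, hy₁, hcard⟩ := decomp hr
    by_cases h0 : y₁ = 0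
    · subst h0
      rw [hy₁]
      simp only [zero_add]
      rw [wsum_single, Ssum_single]
      push_cast
      simp
    · have h1 := ih y₁ (by omega) h0
      have hws : wsum y = wsum y₁ + r := by
        rw [hy₁, wsum_add, wsum_single]; push_cast; ring
      rw [hws, hy₁, Ssum_add, Ssum_single]
      have := hsub (wsum y₁) r
      push_cast
      linarith

lemma symm_eq (hf : f ∈ Set.Ioo (0 : ℝ) 1) (hmin : MinimalValid f π) (x : ℝ) :
    π x + π (f - x) = 1 := by
  have hge : 1 ≤ π x + π (f - x) := by
    have hfeas : Feasible f (Finsupp.single x 1 + Finsupp.single (f - x) 1) := by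
      refine ⟨0, ?_⟩
      rw [raw_eq_wsum, wsum_add, wsum_single, wsum_single]
      push_cast; ring
    have := valid_sum hmin.1 hfeas
    rw [Ssum_add, Ssum_single, Ssum_single] at this
    push_cast at this
    linarith
  refine le_antisymm ?_ hge
  by_contra hlt
  push_neg at hlt
  set ε := π x + π (f - x) - 1 with hε
  have hεpos : 0 < ε := by simp only [hε]; linarith
  have hle1 := le_one hmin x
  have hle2 := le_one hmin (f - x)
  have hεx : ε ≤ π x := by simp only [hε]; linarith
  have hε1 : ε ≤ 1 := by simp only [hε]; linarith
  refine update_contra hmin x (π x - ε ^ 2 / 2) (by nlinarith) (by nlinarith) ?_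
  intro y hy hyx
  obtain ⟨z, hz⟩ := hy
  rw [raw_eq_wsum] at hz
  set m := y x with hmdef
  have hm1 : 1 ≤ (m : ℝ) := by exact_mod_cast Nat.one_le_iff_ne_zero.2 hyx
  have hnn2 : 0 ≤ Ssum π (y.erase x) := Ssum_nonneg hmin.1.1 _
  -- key inequality : 1 + ε ≤ Ssum π (y.erase x) + m * π x
  have hkey : 1 + ε ≤ Ssum π (y.erase x) + (m : ℝ) * π x := by
    set y₁ := y.erase x + Finsupp.single x (m - 1) with hy₁def
    have hScast : ((m - 1 : ℕ) : ℝ) = (m : ℝ) - 1 := by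
      have : 1 ≤ m := Nat.one_le_iff_ne_zero.2 hyx
      push_cast [this]; ring
    have hSy₁ : Ssum π y₁ = Ssum π (y.erase x) + π x * ((m : ℝ) - 1) := by
      rw [hy₁def, Ssum_add, Ssum_single, hScast]
    have hwy : wsum y = wsum (y.erase x) + x * (m : ℝ) := wsum_erase y x
    have hwy₁ : wsum y₁ = wsum (y.erase x) + x * ((m : ℝ) - 1) := by
      rw [hy₁def, wsum_add, wsum_single, hScast]
    have hwz : wsum y - f = (z : ℝ) := hz
    have hwy₁' : wsum y₁ = (f - x) + (z : ℝ) := by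
      rw [hwy₁]; rw [hwy] at hwz; ring_nf; ring_nf at hwz; linarith
    by_cases h0 : y₁ = 0
    · exfalso
      have hw0 : wsum y₁ = 0 := by rw [h0]; exact wsum_zero
      rw [hwy₁'] at hw0
      have hfx : f - x = ((-z : ℤ) : ℝ) := by push_cast; linarith
      have hz0 : π (f - x) = 0 := by rw [hfx]; exact int_zero hf hmin (-z)
      have hx1 := le_one hmin x
      simp only [hε] at hεpos
      rw [hz0] at hεpos
      linarith
    · have hch := chain (subadd hmin) (cardy y₁) y₁ le_rfl h0
      have hper : π (wsum y₁) = π (f - x) := by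
        rw [hwy₁']; exact periodic hf hmin (f - x) z
      rw [hper] at hch
      rw [hSy₁] at hch
      have : π x + π (f - x) = 1 + ε := by simp only [hε]; ring
      nlinarith
  -- goal : 1 ≤ Ssum π (y.erase x) + (π x - ε²/2) * m
  rcases le_or_gt (m : ℝ) (2 / ε) with hcase | hcase
  · have h2 : (m : ℝ) * (ε ^ 2 / 2) ≤ ε := by
      rw [le_div_iff₀ hεpos] at hcase
      nlinarith
    nlinarith
  · have h2 : 2 < (m : ℝ) * ε := by
      rw [div_lt_iff₀ hεpos] at hcase
      linarith
    have h4 : ε / 2 ≤ π x - ε ^ 2 / 2 := by nlinarith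
    have h5 : ε / 2 * (m : ℝ) ≤ (π x - ε ^ 2 / 2) * (m : ℝ) :=
      mul_le_mul_of_nonneg_right h4 (by linarith)
    nlinarith

/-- Tightness propagation along `E`-set inclusion. -/
lemma tight {π' : ℝ → ℝ} (hsub : ∀ a b : ℝ, π (a + b) ≤ π a + π b)
    (hE : Eset π ⊆ Eset π') :
    ∀ N : ℕ, ∀ y : ℝ →₀ ℕ, cardy y ≤ N → y ≠ 0 →
      Ssum π y = π (wsum y) → Ssum π' y = π' (wsum y) := by
  intro N
  induction N with
  | zero =>
    intro y hc hy
    exact absurd hc (by have := cardy_pos hy; omega)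
  | succ N ih =>
    intro y hc hy heq
    obtain ⟨r, hr⟩ := Finsupp.support_nonempty_iff.2 hy
    obtain ⟨y₁, hy₁, hcard⟩ := decomp hr
    have hws : wsum y = wsum y₁ + r := by
      rw [hy₁, wsum_add, wsum_single]; push_cast; ring
    have hSs : Ssum π y = Ssum π y₁ + π r := by
      rw [hy₁, Ssum_add, Ssum_single]; push_cast; ring
    have hSs' : Ssum π' y = Ssum π' y₁ + π' r := by
      rw [hy₁, Ssum_add, Ssum_single]; push_cast; ring
    by_cases h0 : y₁ = 0
    · subst h0
      rw [hSs', hws, wsum_zero, Ssum_zero]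
      simp
    · have hch := chain hsub (cardy y₁) y₁ le_rfl h0
      have hsub2 := hsub (wsum y₁) r
      rw [hSs, hws] at heq
      have ht1 : Ssum π y₁ = π (wsum y₁) := by linarith
      have ht2 : π (wsum y₁) + π r = π (wsum y₁ + r) := by linarith
      have hmem : ((wsum y₁, r) : ℝ × ℝ) ∈ Eset π := ht2
      have ht2' : π' (wsum y₁) + π' r = π' (wsum y₁ + r) := hE hmem
      have ih1 := ih y₁ (by omega) h0 ht1
      rw [hSs', hws, ih1, ht2']

end Minimal

end Stmt2Aux
theorem stmt2 (f : ℝ) (hf : f ∈ Set.Ioo (0 : ℝ) 1) (π π' : ℝ → ℝ)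
    (hπ : MinimalValid f π) (hπ' : MinimalValid f π') :
    Eset π ⊆ Eset π' ↔ Pset f π ⊆ Pset f π' := by
  open Stmt2Aux in
  constructor
  · -- E ⊆ E' → P ⊆ P'
    intro hE y hy
    obtain ⟨hfeas, hsum⟩ := hy
    obtain ⟨z, hz⟩ := hfeas
    have hsum' : Ssum π y = 1 := hsum
    have hy0 : y ≠ 0 := by
      rintro rfl
      rw [show Ssum π (0 : ℝ →₀ ℕ) = 0 from Ssum_zero _] at hsum'
      norm_num at hsum'
    rw [raw_eq_wsum] at hz
    have hz' : wsum y - f = (z : ℝ) := hz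
    have hw : wsum y = f + (z : ℝ) := by linarith
    have hπw : π (wsum y) = 1 := by
      rw [hw, periodic hf hπ f z, pi_f hπ]
    have h1 : Ssum π y = π (wsum y) := by rw [hsum', hπw]
    have h2 := tight (subadd hπ) hE (cardy y) y le_rfl hy0 h1
    refine ⟨⟨z, by rw [raw_eq_wsum]; exact hz⟩, ?_⟩
    have hπ'w : π' (wsum y) = 1 := by
      rw [hw, periodic hf hπ' f z, pi_f hπ']
    show Ssum π' y = 1
    rw [h2, hπ'w]
  · -- P ⊆ P' → E ⊆ E'
    intro hP p hp
    obtain ⟨a, b⟩ := p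
    have hab : π a + π b = π (a + b) := hp
    set c := f - (a + b) with hc
    have hsymc : π (a + b) + π c = 1 := symm_eq hf hπ (a + b)
    have hv : (Finsupp.single a 1 + (Finsupp.single b 1 + Finsupp.single c 1))
        ∈ Pset f π := by
      constructor
      · refine ⟨0, ?_⟩
        rw [raw_eq_wsum, wsum_add, wsum_add, wsum_single, wsum_single, wsum_single]
        push_cast
        simp only [hc]
        ring
      · show Ssum π (Finsupp.single a 1 + (Finsupp.single b 1 + Finsupp.single c 1)) = 1
        rw [Ssum_add, Ssum_add, Ssum_single, Ssum_single, Ssum_single]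
        push_cast
        linarith
    have hw : (Finsupp.single (a + b) 1 + Finsupp.single c 1) ∈ Pset f π := by
      constructor
      · refine ⟨0, ?_⟩
        rw [raw_eq_wsum, wsum_add, wsum_single, wsum_single]
        push_cast
        simp only [hc]
        ring
      · show Ssum π (Finsupp.single (a + b) 1 + Finsupp.single c 1) = 1
        rw [Ssum_add, Ssum_single, Ssum_single]
        push_cast
        linarith
    have h1 : Ssum π' (Finsupp.single a 1 + (Finsupp.single b 1 + Finsupp.single c 1)) = 1 :=
      (hP hv).2
    have h2 : Ssum π' (Finsupp.single (a + b) 1 + Finsupp.single c 1) = 1 :=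
      (hP hw).2
    rw [Ssum_add, Ssum_add, Ssum_single, Ssum_single, Ssum_single] at h1
    rw [Ssum_add, Ssum_single, Ssum_single] at h2
    push_cast at h1 h2
    show π' a + π' b = π' (a + b)
    linarith
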